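/- For a directed tree T, the poset of transitively biclosed reorientations of tc(T) (ordered by inclusion of reversed edge sets) is a lattice: the join of two transitively biclosed reorientations R₁, R₂ is the reorientation R with rev(R) equal to the transitive closure of rev(R₁) ∪ rev(R₂), which is itself transitively biclosed. -/

import Mathlib

/-- A transitively biclosed reorientation of `tc(T)`: a set `rev` of reversed edges
contained in `tc(T)`, transitively closed, and transitively coclosed. -/
def IsBiclosed {V : Type*} (T rev : V → V → Prop) : Prop :=
  (∀ u v, rev u v → Relation.TransGen T u v) ∧
  (∀ u v w, rev u v → rev v w → rev u w) ∧
  (∀ u v w, Relation.TransGen T u v → ¬ rev u v →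
    Relation.TransGen T v w → ¬ rev v w → ¬ rev u w)

section Aux
open SimpleGraph Relation
variable {V : Type*} {T : V → V → Prop}

lemma noCycle (htree : (fromRel T).IsTree) (hirr : ∀ v, ¬ T v v)
    (hasymm : ∀ u v, T u v → ¬ T v u) : ∀ a, ¬ TransGen T a a := by
  intro a ha
  obtain ⟨b, hab, hba⟩ := Relation.TransGen.head'_iff.mp ha
  have hne : b ≠ a := by rintro rfl; exact hirr b hab
  have hadj : (fromRel T).Adj a b := (fromRel_adj T a b).mpr ⟨fun h => hirr a (h ▸ hab), Or.inl hab⟩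
  have hbridge := (isAcyclic_iff_forall_adj_isBridge.mp htree.IsAcyclic hadj)
  rw [isBridge_iff] at hbridge
  apply hbridge
  -- reachability from b to a in the deleted graph, hence a to b by symm
  have key : ∀ c, ReflTransGen T c a → c = a ∨ ((fromRel T) \ fromEdgeSet {s(a, b)}).Reachable c a := by
    intro c hc
    induction hc using ReflTransGen.head_induction_on with
    | refl => exact Or.inl rfl
    | head h h' ih =>
      rename_i x y
      by_cases hxa : x = a
      · exact Or.inl hxa
      · right
        have hedge : ¬ (fromEdgeSet {s(a, b)}).Adj x y := by
          simp only [fromEdgeSet_adj, Set.mem_singleton_iff, Sym2.eq, Sym2.rel_iff',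
            Prod.mk.injEq, Prod.swap_prod_mk]
          rintro ⟨(⟨h1, h2⟩ | ⟨h1, h2⟩), _⟩
          · exact hxa h1
          · exact hasymm a b hab (by rw [h1, h2] at h; exact h)
        have hadjxy : ((fromRel T) \ fromEdgeSet {s(a, b)}).Adj x y := by
          refine ⟨(fromRel_adj T x y).mpr ⟨fun hh => hirr x (hh ▸ h), Or.inl h⟩, hedge⟩
        rcases ih with h2 | hreach
        · subst h2; exact Adj.reachable hadjxy
        · exact (Adj.reachable hadjxy).trans hreach
  rcases key b hba with h | h
  · exact absurd h hne
  · exact h.symm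

lemma existsWalk (htree : (fromRel T).IsTree) (hirr : ∀ v, ¬ T v v)
    (hasymm : ∀ u v, T u v → ¬ T v u) {a b : V} (h : TransGen T a b) :
    ∃ p : (fromRel T).Walk a b, p.IsPath ∧
      ∀ c ∈ p.support, ReflTransGen T a c ∧ ReflTransGen T c b := by
  induction h using TransGen.head_induction_on with
  | single h =>
    rename_i x
    have hne : x ≠ b := fun hh => hirr x (hh ▸ h)
    have hadj : (fromRel T).Adj x b := (fromRel_adj T x b).mpr ⟨hne, Or.inl h⟩
    refine ⟨Walk.cons hadj Walk.nil, ?_, ?_⟩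
    · simp [Walk.isPath_def, hne]
    · intro c hc
      simp only [Walk.support_cons, Walk.support_nil, List.mem_cons, List.mem_singleton] at hc
      rcases hc with rfl | rfl | h'
      · exact ⟨ReflTransGen.refl, ReflTransGen.single h⟩
      · exact ⟨ReflTransGen.single h, ReflTransGen.refl⟩
      · exact absurd h' List.not_mem_nil
  | head h' h ih =>
    rename_i x c
    obtain ⟨p, hp, hprop⟩ := ih
    have hnotmem : x ∉ p.support := by
      intro hx
      exact noCycle htree hirr hasymm x (TransGen.head' h' (hprop x hx).1)
    have hne : x ≠ c := fun hh => hirr x (hh ▸ h')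
    have hadj : (fromRel T).Adj x c := (fromRel_adj T x c).mpr ⟨hne, Or.inl h'⟩
    refine ⟨Walk.cons hadj p, hp.cons hnotmem, ?_⟩
    intro d hd
    simp only [Walk.support_cons, List.mem_cons] at hd
    rcases hd with rfl | hd
    · exact ⟨ReflTransGen.refl, h.to_reflTransGen.head h'⟩
    · exact ⟨(hprop d hd).1.head h', (hprop d hd).2⟩

lemma concatPath (htree : (fromRel T).IsTree) (hirr : ∀ v, ¬ T v v)
    (hasymm : ∀ u v, T u v → ¬ T v u) {u v w : V}
    (huv : TransGen T u v) (hvw : TransGen T v w) :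
    ∃ p : (fromRel T).Walk u w, p.IsPath ∧ v ∈ p.support ∧
      ∀ c ∈ p.support, (ReflTransGen T u c ∧ ReflTransGen T c v) ∨
        (ReflTransGen T v c ∧ ReflTransGen T c w) := by
  obtain ⟨p, hp, hpprop⟩ := existsWalk htree hirr hasymm huv
  obtain ⟨q, hq, hqprop⟩ := existsWalk htree hirr hasymm hvw
  refine ⟨p.append q, ?_, ?_, ?_⟩
  · rw [Walk.isPath_def, Walk.support_append]
    refine List.Nodup.append hp.support_nodup (hq.support_nodup.tail) ?_
    intro c hcp hcq
    have hcq' : c ∈ q.support := List.mem_of_mem_tail hcq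
    have hvc : ReflTransGen T v c := (hqprop c hcq').1
    have hcv : ReflTransGen T c v := (hpprop c hcp).2
    have hcnev : c ≠ v := by
      rintro rfl
      have := hq.support_nodup
      rw [q.support_eq_cons] at this
      exact (List.nodup_cons.mp this).1 hcq
    rcases (Relation.reflTransGen_iff_eq_or_transGen.mp hvc) with h | h
    · exact hcnev h
    · exact noCycle htree hirr hasymm c (Relation.TransGen.trans_right hcv h)
  · rw [Walk.support_append]
    exact List.mem_append_left _ p.end_mem_support
  · intro c hc
    rw [Walk.support_append] at hc
    rcases List.mem_append.mp hc with hcp | hcq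
    · exact Or.inl (hpprop c hcp)
    · exact Or.inr (hqprop c (List.mem_of_mem_tail hcq))

lemma trichotomy (htree : (fromRel T).IsTree) (hirr : ∀ v, ¬ T v v)
    (hasymm : ∀ u v, T u v → ¬ T v u) {u v w x : V}
    (huv : TransGen T u v) (hvw : TransGen T v w)
    (hux : TransGen T u x) (hxw : TransGen T x w) :
    x = v ∨ TransGen T x v ∨ TransGen T v x := by
  obtain ⟨p, hp, hpv, hpprop⟩ := concatPath htree hirr hasymm huv hvw
  obtain ⟨q, hq, hqx, hqprop⟩ := concatPath htree hirr hasymm hux hxw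
  have hpq : p = q := by
    have := isAcyclic_iff_path_unique.mp htree.IsAcyclic ⟨p, hp⟩ ⟨q, hq⟩
    exact Subtype.ext_iff.mp this
  have hv : v ∈ q.support := hpq ▸ hpv
  rcases hqprop v hv with ⟨_, h2⟩ | ⟨h1, _⟩
  · rcases Relation.reflTransGen_iff_eq_or_transGen.mp h2 with h | h
    · exact Or.inl h
    · exact Or.inr (Or.inr h)
  · rcases Relation.reflTransGen_iff_eq_or_transGen.mp h1 with h | h
    · exact Or.inl h.symm
    · exact Or.inr (Or.inl h)

lemma join_biclosed (htree : (fromRel T).IsTree) (hirr : ∀ v, ¬ T v v)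
    (hasymm : ∀ u v, T u v → ¬ T v u) {rev₁ rev₂ : V → V → Prop}
    (h₁ : IsBiclosed T rev₁) (h₂ : IsBiclosed T rev₂) :
    IsBiclosed T (TransGen (fun a b => rev₁ a b ∨ rev₂ a b)) := by
  obtain ⟨h₁s, h₁t, h₁c⟩ := h₁
  obtain ⟨h₂s, h₂t, h₂c⟩ := h₂
  have hJsub : ∀ u v, TransGen (fun a b => rev₁ a b ∨ rev₂ a b) u v → TransGen T u v := by
    intro u v h
    induction h with
    | single h => rcases h with h | h; exacts [h₁s _ _ h, h₂s _ _ h]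
    | tail h h' ih => rcases h' with h' | h'; exacts [ih.trans (h₁s _ _ h'), ih.trans (h₂s _ _ h')]
  have mk : ∀ {a b : V}, rev₁ a b ∨ rev₂ a b →
      TransGen (fun a b => rev₁ a b ∨ rev₂ a b) a b := fun h => TransGen.single h
  refine ⟨hJsub, fun u v w a b => a.trans b, ?_⟩
  intro u v w huv hJuv hvw hJvw hJuw
  suffices key : ∀ u', TransGen (fun a b => rev₁ a b ∨ rev₂ a b) u' w →
      TransGen T u' v → TransGen (fun a b => rev₁ a b ∨ rev₂ a b) u' v from
    hJuv (key u hJuw huv)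
  intro u' hJ
  induction hJ using TransGen.head_induction_on with
  | single h =>
    rename_i x
    intro hxv
    rcases h with h | h
    · by_cases hxv1 : rev₁ x v
      · exact mk (Or.inl hxv1)
      · by_cases hvw1 : rev₁ v w
        · exact absurd (mk (Or.inl hvw1)) hJvw
        · exact absurd h (h₁c x v w hxv hxv1 hvw hvw1)
    · by_cases hxv2 : rev₂ x v
      · exact mk (Or.inr hxv2)
      · by_cases hvw2 : rev₂ v w
        · exact absurd (mk (Or.inr hvw2)) hJvw
        · exact absurd h (h₂c x v w hxv hxv2 hvw hvw2)
  | head h' hxw ih =>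
    rename_i x c
    intro hxv
    have hxc : TransGen T x c := by
      rcases h' with h' | h'; exacts [h₁s _ _ h', h₂s _ _ h']
    have hcw : TransGen T c w := hJsub _ _ hxw
    rcases trichotomy htree hirr hasymm hxv hvw hxc hcw with h | h | h
    · subst h; exact mk h'
    · exact (mk h').trans (ih h)
    · rcases h' with h' | h'
      · by_cases hxv1 : rev₁ x v
        · exact mk (Or.inl hxv1)
        · by_cases hvc1 : rev₁ v c
          · exact absurd ((mk (Or.inl hvc1)).trans hxw) hJvw
          · exact absurd h' (h₁c x v c hxv hxv1 h hvc1)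
      · by_cases hxv2 : rev₂ x v
        · exact mk (Or.inr hxv2)
        · by_cases hvc2 : rev₂ v c
          · exact absurd ((mk (Or.inr hvc2)).trans hxw) hJvw
          · exact absurd h' (h₂c x v c hxv hxv2 h hvc2)

lemma compl_biclosed {rev : V → V → Prop} (h : IsBiclosed T rev) :
    IsBiclosed T (fun u v => TransGen T u v ∧ ¬ rev u v) := by
  obtain ⟨hs, ht, hc⟩ := h
  refine ⟨fun u v h => h.1, ?_, ?_⟩
  · rintro u v w ⟨huv, hn1⟩ ⟨hvw, hn2⟩
    exact ⟨huv.trans hvw, hc u v w huv hn1 hvw hn2⟩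
  · rintro u v w huv h1 hvw h2 ⟨huw, h3⟩
    have r1 : rev u v := not_not.mp fun hn => h1 ⟨huv, hn⟩
    have r2 : rev v w := not_not.mp fun hn => h2 ⟨hvw, hn⟩
    exact h3 (ht u v w r1 r2)

lemma join_lub {rev₁ rev₂ rev : V → V → Prop}
    (ht : ∀ u v w, rev u v → rev v w → rev u w)
    (hs₁ : ∀ u v, rev₁ u v → rev u v) (hs₂ : ∀ u v, rev₂ u v → rev u v) :
    ∀ u v, TransGen (fun a b => rev₁ a b ∨ rev₂ a b) u v → rev u v := by
  intro u v h
  induction h with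
  | single h => rcases h with h | h; exacts [hs₁ _ _ h, hs₂ _ _ h]
  | tail h h' ih =>
    rcases h' with h' | h'; exacts [ht _ _ _ ih (hs₁ _ _ h'), ht _ _ _ ih (hs₂ _ _ h')]

end Aux

/-- For a directed tree `T`, the transitively biclosed reorientations of `tc(T)` form a
lattice: the join of two of them is the transitive closure of the union of their
reversed edge sets, which is again transitively biclosed. -/
theorem biclosed_lattice {V : Type*} [Fintype V] (T : V → V → Prop)
    (htree : (SimpleGraph.fromRel T).IsTree)
    (hirr : ∀ v, ¬ T v v) (hasymm : ∀ u v, T u v → ¬ T v u) :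
    (∀ rev₁ rev₂ : V → V → Prop, IsBiclosed T rev₁ → IsBiclosed T rev₂ →
      IsBiclosed T (Relation.TransGen (fun a b => rev₁ a b ∨ rev₂ a b)) ∧
      (∀ u v, rev₁ u v → Relation.TransGen (fun a b => rev₁ a b ∨ rev₂ a b) u v) ∧
      (∀ u v, rev₂ u v → Relation.TransGen (fun a b => rev₁ a b ∨ rev₂ a b) u v) ∧
      (∀ rev : V → V → Prop, IsBiclosed T rev →
        (∀ u v, rev₁ u v → rev u v) → (∀ u v, rev₂ u v → rev u v) →
        ∀ u v, Relation.TransGen (fun a b => rev₁ a b ∨ rev₂ a b) u v → rev u v)) ∧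
    (∀ rev₁ rev₂ : V → V → Prop, IsBiclosed T rev₁ → IsBiclosed T rev₂ →
      ∃ revM : V → V → Prop, IsBiclosed T revM ∧
        (∀ u v, revM u v → rev₁ u v) ∧ (∀ u v, revM u v → rev₂ u v) ∧
        ∀ rev : V → V → Prop, IsBiclosed T rev →
          (∀ u v, rev u v → rev₁ u v) → (∀ u v, rev u v → rev₂ u v) →
          ∀ u v, rev u v → revM u v) := by
  constructor
  · intro rev₁ rev₂ h₁ h₂
    exact ⟨join_biclosed htree hirr hasymm h₁ h₂,
      fun u v h => Relation.TransGen.single (Or.inl h),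
      fun u v h => Relation.TransGen.single (Or.inr h),
      fun rev hrev hs₁ hs₂ => join_lub hrev.2.1 hs₁ hs₂⟩
  · intro rev₁ rev₂ h₁ h₂
    set J' := Relation.TransGen (fun a b =>
      (Relation.TransGen T a b ∧ ¬ rev₁ a b) ∨ (Relation.TransGen T a b ∧ ¬ rev₂ a b)) with hJ'def
    have hJ' : IsBiclosed T J' :=
      join_biclosed htree hirr hasymm (compl_biclosed h₁) (compl_biclosed h₂)
    refine ⟨fun u v => Relation.TransGen T u v ∧ ¬ J' u v, compl_biclosed hJ', ?_, ?_, ?_⟩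
    · rintro u v ⟨ht, hn⟩
      by_contra hr
      exact hn (Relation.TransGen.single (Or.inl ⟨ht, hr⟩))
    · rintro u v ⟨ht, hn⟩
      by_contra hr
      exact hn (Relation.TransGen.single (Or.inr ⟨ht, hr⟩))
    · intro rev hrev hs₁ hs₂ u v hr
      refine ⟨hrev.1 u v hr, fun hJ => ?_⟩
      have hlub := join_lub (rev := fun u v => Relation.TransGen T u v ∧ ¬ rev u v)
        (compl_biclosed hrev).2.1
        (fun u v h => ⟨h.1, fun hrv => h.2 (hs₁ u v hrv)⟩)
        (fun u v h => ⟨h.1, fun hrv => h.2 (hs₂ u v hrv)⟩) u v hJ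
      exact hlub.2 hr
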